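/- Let f ∈ H_{n,2d} satisfy f ∉ Σ_{n,2d} + C_{n,2d}. Then for every ℓ ∈ ℕ, the form x₁^{2ℓ}·f is not in Σ_{n,2d+2ℓ} + C_{n,2d+2ℓ}. -/

import Mathlib

open MvPolynomial

/-- Embed an exponent vector into `ℝⁿ`. -/
def expToVec {n : ℕ} (α : Fin n →₀ ℕ) : Fin n → ℝ := fun i => (α i : ℝ)

/-- `h` is a nonnegative circuit form of degree `d` in `n` variables: it is
homogeneous of degree `d`, nonnegative, its support consists of a set `S` of
affinely independent even exponent vectors with positive coefficients
(the outer terms), possibly together with one additional exponent `β` lying in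
the relative interior of the convex hull of `S` (the inner term). -/
def IsNonnegCircuit {n : ℕ} (d : ℕ) (h : MvPolynomial (Fin n) ℝ) : Prop :=
  h.IsHomogeneous d ∧ (∀ x : Fin n → ℝ, 0 ≤ eval x h) ∧
  ∃ S : Finset (Fin n →₀ ℕ),
    (∀ α ∈ S, (∀ i, Even (α i)) ∧ 0 < coeff α h) ∧
    AffineIndependent ℝ (fun a : {α : (Fin n →₀ ℕ) // α ∈ S} => expToVec a.1) ∧
    ((h.support : Set (Fin n →₀ ℕ)) = ↑S ∨
      ∃ β : Fin n →₀ ℕ, β ∉ S ∧ (h.support : Set (Fin n →₀ ℕ)) = insert β ↑S ∧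
        expToVec β ∈ intrinsicInterior ℝ (convexHull ℝ (expToVec '' ↑S)))

/-- `f` is a sum of squares of forms of degree `d` (hence a form of degree `2d`). -/
def IsSOSForm {n : ℕ} (d : ℕ) (f : MvPolynomial (Fin n) ℝ) : Prop :=
  ∃ (k : ℕ) (g : Fin k → MvPolynomial (Fin n) ℝ),
    (∀ i, (g i).IsHomogeneous d) ∧ f = ∑ i, (g i) ^ 2

/-- `f` is a sum of nonnegative circuit forms of degree `d` (SONC). -/
def IsSONC {n : ℕ} (d : ℕ) (f : MvPolynomial (Fin n) ℝ) : Prop :=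
  ∃ (k : ℕ) (h : Fin k → MvPolynomial (Fin n) ℝ),
    (∀ i, IsNonnegCircuit d (h i)) ∧ f = ∑ i, h i

open Pointwise

namespace SoncAux


variable {n : ℕ}

lemma vanish_supp (i0 : Fin n) (p : MvPolynomial (Fin n) ℝ)
    (h : ∀ x : Fin n → ℝ, x i0 = 0 → eval x p = 0) :
    ∀ α ∈ p.support, α i0 ≠ 0 := by
  classical
  intro α hα h0
  set g : Fin n → MvPolynomial (Fin n) ℝ := fun j => if j = i0 then 0 else X j with hg
  have heval : ∀ x : Fin n → ℝ, eval x (aeval g p) = eval (fun j => if j = i0 then 0 else x j) p := by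
    intro x
    have h1 : eval x (aeval g p) = eval₂ (RingHom.id ℝ) x (eval₂ C g p) := by
      rw [aeval_def, MvPolynomial.algebraMap_eq]
      rfl
    rw [h1, ← eval₂_assoc]
    have h2 : (fun t => eval₂ (RingHom.id ℝ) x (g t)) = (fun j => if j = i0 then (0:ℝ) else x j) := by
      funext t
      by_cases ht : t = i0 <;> simp [hg, ht]
    rw [h2]
    rfl
  have hq : aeval g p = 0 := by
    apply MvPolynomial.funext
    intro x
    rw [heval x, h _ (by simp), map_zero]
  have hcoeff : coeff α (aeval g p) = coeff α p := by
    have hsum : aeval g p = ∑ β ∈ p.support, aeval g (monomial β (coeff β p)) := by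
      rw [← map_sum]
      congr 1
      exact p.as_sum
    rw [hsum, coeff_sum]
    rw [Finset.sum_eq_single α]
    · rw [aeval_monomial]
      have hfor : ∀ j ∈ α.support, g j = X j := by
        intro j hj
        have : j ≠ i0 := by
          intro hji; apply Finsupp.mem_support_iff.mp hj; rw [hji]; exact h0
        simp [hg, this]
      rw [Finsupp.prod_congr (fun j hj => by rw [hfor j hj])]
      rw [MvPolynomial.algebraMap_eq, ← monomial_eq, coeff_monomial, if_pos rfl]
    · intro β hβ hβα
      by_cases hβ0 : β i0 = 0
      · rw [aeval_monomial]
        have hfor : ∀ j ∈ β.support, g j = X j := by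
          intro j hj
          have : j ≠ i0 := by
            intro hji; apply Finsupp.mem_support_iff.mp hj; rw [hji]; exact hβ0
          simp [hg, this]
        rw [Finsupp.prod_congr (fun j hj => by rw [hfor j hj])]
        rw [MvPolynomial.algebraMap_eq, ← monomial_eq, coeff_monomial, if_neg hβα]
      · rw [aeval_monomial]
        have : (β.prod fun i k => g i ^ k) = 0 := by
          apply Finset.prod_eq_zero (Finsupp.mem_support_iff.mpr hβ0)
          simp [hg, zero_pow hβ0]
        rw [this, mul_zero, coeff_zero]
    · intro hα'; exact absurd hα hα'
  rw [hq, coeff_zero] at hcoeff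
  exact (mem_support_iff.mp hα) hcoeff.symm

lemma eq_pow_mul_div (i0 : Fin n) (k : ℕ) (p : MvPolynomial (Fin n) ℝ)
    (h : ∀ α ∈ p.support, k ≤ α i0) :
    p = X i0 ^ k * p.divMonomial (Finsupp.single i0 k) := by
  have hmod : p.modMonomial (Finsupp.single i0 k) = 0 := by
    ext α
    by_cases hle : Finsupp.single i0 k ≤ α
    · rw [coeff_modMonomial_of_le _ hle, coeff_zero]
    · rw [coeff_modMonomial_of_not_le _ hle, coeff_zero]
      by_contra hne
      exact hle (Finsupp.single_le_iff.mpr (h α (mem_support_iff.mpr hne)))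
  have hdm := p.divMonomial_add_modMonomial (Finsupp.single i0 k)
  rw [hmod, add_zero] at hdm
  rw [X_pow_eq_monomial]
  exact hdm.symm

lemma isHomogeneous_div (i0 : Fin n) (k N : ℕ) (p : MvPolynomial (Fin n) ℝ)
    (hp : p.IsHomogeneous (N + k)) :
    (p.divMonomial (Finsupp.single i0 k)).IsHomogeneous N := by
  intro α hα
  rw [coeff_divMonomial] at hα
  have hw := hp hα
  rw [map_add] at hw
  have hs : (Finsupp.weight (1 : Fin n → ℕ)) (Finsupp.single i0 k) = k := by
    rw [Finsupp.weight_apply, Finsupp.sum_single_index] <;> simp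
  rw [hs] at hw
  omega

lemma nonneg_div (i0 : Fin n) (c c' : MvPolynomial (Fin n) ℝ)
    (heq : c = X i0 ^ 2 * c') (hc : ∀ x, 0 ≤ eval x c) (x : Fin n → ℝ) :
    0 ≤ eval x c' := by
  have key : ∀ y : Fin n → ℝ, y i0 ≠ 0 → 0 ≤ eval y c' := by
    intro y hy
    have h0 : (0:ℝ) < y i0 ^ 2 := by positivity
    have h1 := hc y
    rw [heq, map_mul, map_pow, eval_X] at h1
    nlinarith
  by_cases hx : x i0 ≠ 0
  · exact key x hx
  push_neg at hx
  have hcont : Continuous (fun t : ℝ => eval (Function.update x i0 t) c') := by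
    apply (MvPolynomial.continuous_eval c').comp
    apply continuous_pi
    intro j
    simp only [Function.update_apply]
    by_cases hj : j = i0
    · simpa [hj] using continuous_id'
    · simpa [hj] using continuous_const
  have h0 : Function.update x i0 (0:ℝ) = x := by
    rw [← hx, Function.update_eq_self]
  have hlim : Filter.Tendsto (fun t : ℝ => eval (Function.update x i0 t) c')
      (nhdsWithin 0 {(0:ℝ)}ᶜ) (nhds (eval x c')) := by
    have ht := hcont.tendsto 0
    rw [h0] at ht
    exact ht.mono_left nhdsWithin_le_nhds
  refine ge_of_tendsto hlim ?_
  filter_upwards [self_mem_nhdsWithin] with t ht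
  refine key _ ?_
  simpa using ht


lemma circuit_div (i0 : Fin n) (D : ℕ) (c : MvPolynomial (Fin n) ℝ)
    (hc : IsNonnegCircuit (D + 2) c)
    (hvan : ∀ x : Fin n → ℝ, x i0 = 0 → eval x c = 0) :
    ∃ c', c = X i0 ^ 2 * c' ∧ IsNonnegCircuit D c' := by
  classical
  obtain ⟨hhom, hpos, S, hS, hai, hsupp⟩ := hc
  have h1 : ∀ α ∈ c.support, α i0 ≠ 0 := vanish_supp i0 c hvan
  have hS2 : ∀ α ∈ S, 2 ≤ α i0 := by
    intro α hα
    have hmem : α ∈ c.support := mem_support_iff.mpr (ne_of_gt (hS α hα).2)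
    obtain ⟨r, hr⟩ := (hS α hα).1 i0
    have := h1 α hmem
    omega
  have hhull : ∀ y ∈ convexHull ℝ (expToVec '' (↑S : Set (Fin n →₀ ℕ))), (2:ℝ) ≤ y i0 := by
    intro y hy
    have hset : convexHull ℝ (expToVec '' (↑S : Set (Fin n →₀ ℕ)))
        ⊆ {z : Fin n → ℝ | (2:ℝ) ≤ z i0} := by
      apply convexHull_min
      · rintro _ ⟨α, hα, rfl⟩
        have h2 := hS2 α (Finset.mem_coe.mp hα)
        show (2:ℝ) ≤ (α i0 : ℝ)
        exact_mod_cast h2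
      · exact convex_halfSpace_ge ⟨fun _ _ => rfl, fun _ _ => rfl⟩ 2
    exact hset hy
  have hall2 : ∀ α ∈ c.support, 2 ≤ α i0 := by
    intro α hα
    have hsupp' := hsupp
    rcases hsupp' with hcase | ⟨β, hβS, hcase, hβint⟩
    · apply hS2
      have : (α : Fin n →₀ ℕ) ∈ (↑S : Set (Fin n →₀ ℕ)) := hcase ▸ (Finset.mem_coe.mpr hα)
      exact Finset.mem_coe.mp this
    · have hmem : (α : Fin n →₀ ℕ) ∈ insert β (↑S : Set (Fin n →₀ ℕ)) :=
        hcase ▸ (Finset.mem_coe.mpr hα)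
      rcases hmem with rfl | hmem
      · have hy : expToVec α ∈ convexHull ℝ (expToVec '' (↑S : Set (Fin n →₀ ℕ))) :=
          intrinsicInterior_subset hβint
        have h2 : (2:ℝ) ≤ (α i0 : ℝ) := hhull _ hy
        exact_mod_cast h2
      · exact hS2 α (Finset.mem_coe.mp hmem)
  set s : Fin n →₀ ℕ := Finsupp.single i0 2 with hsdef
  set c' := c.divMonomial s with hc'def
  have hle : ∀ α ∈ c.support, s ≤ α := fun α hα => Finsupp.single_le_iff.mpr (hall2 α hα)
  have hSle : ∀ α ∈ S, s ≤ α := fun α hα => Finsupp.single_le_iff.mpr (hS2 α hα)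
  have heq : c = X i0 ^ 2 * c' := eq_pow_mul_div i0 2 c hall2
  have hco : ∀ α, s ≤ α → coeff (α - s) c' = coeff α c := by
    intro α hαle
    rw [hc'def, coeff_divMonomial]
    congr 1
    rw [add_comm]
    exact tsub_add_cancel_of_le hαle
  have hsuppc' : (c'.support : Set (Fin n →₀ ℕ)) = (fun α => α - s) '' ↑c.support := by
    ext γ
    simp only [Set.mem_image, Finset.mem_coe, mem_support_iff]
    constructor
    · intro hγ
      refine ⟨s + γ, ?_, ?_⟩
      · rwa [hc'def, coeff_divMonomial] at hγ
      · rw [add_tsub_cancel_left]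
    · rintro ⟨α, hα, rfl⟩
      rw [hc'def, coeff_divMonomial, add_comm,
        tsub_add_cancel_of_le (hle α (mem_support_iff.mpr hα))]
      exact hα
  set S' : Finset (Fin n →₀ ℕ) := S.image (fun α => α - s) with hS'def
  set v : Fin n → ℝ := expToVec s with hvdef
  have hexp : ∀ α, s ≤ α → expToVec (α - s) = -v + expToVec α := by
    intro α hαle
    funext i
    have hti : (α - s) i = α i - s i := Finsupp.tsub_apply α s i
    have hle' : s i ≤ α i := Finsupp.le_def.mp hαle i
    show ((α - s) i : ℝ) = -v i + (α i : ℝ)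
    rw [hti, Nat.cast_sub hle', hvdef]
    show (α i : ℝ) - (s i : ℝ) = -(s i : ℝ) + (α i : ℝ)
    ring
  refine ⟨c', heq, isHomogeneous_div i0 2 D c hhom, nonneg_div i0 c c' heq hpos, S', ?_, ?_, ?_⟩
  · rintro γ hγ
    obtain ⟨α, hα, rfl⟩ := Finset.mem_image.mp hγ
    constructor
    · intro i
      obtain ⟨r, hr⟩ := (hS α hα).1 i
      have hti : (α - s) i = α i - s i := Finsupp.tsub_apply α s i
      by_cases hi : i = i0
      · subst hi
        have h2 := hS2 α hα
        rw [hti, hsdef, Finsupp.single_eq_same]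
        exact ⟨r - 1, by omega⟩
      · rw [hti, hsdef, Finsupp.single_eq_of_ne' (fun hh => hi hh.symm)]
        exact ⟨r, by omega⟩
    · rw [hco α (hSle α hα)]
      exact (hS α hα).2
  · -- affine independence
    have hmapsto : ∀ a : {α // α ∈ S}, a.1 - s ∈ S' := fun a => Finset.mem_image_of_mem _ a.2
    let eqv : {α // α ∈ S} ≃ {α // α ∈ S'} :=
      { toFun := fun a => ⟨a.1 - s, hmapsto a⟩
        invFun := fun b => ⟨b.1 + s, by
          obtain ⟨α, hα, hval⟩ := Finset.mem_image.mp b.2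
          rw [← hval, tsub_add_cancel_of_le (hSle α hα)]
          exact hα⟩
        left_inv := fun a => Subtype.ext (tsub_add_cancel_of_le (hSle a.1 a.2))
        right_inv := fun b => Subtype.ext (add_tsub_cancel_right _ _) }
    rw [← affineIndependent_equiv eqv]
    have hmap := hai.map' (AffineEquiv.constVAdd ℝ (Fin n → ℝ) (-v)).toAffineMap
        (AffineEquiv.constVAdd ℝ (Fin n → ℝ) (-v)).injective
    convert hmap using 1
    funext a
    show expToVec (a.1 - s) = _
    rw [hexp a.1 (hSle a.1 a.2)]
    rfl
  · have hsupp' := hsupp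
    rcases hsupp' with hcase | ⟨β, hβS, hcase, hβint⟩
    · left
      rw [hsuppc', hcase, hS'def, Finset.coe_image]
    · right
      have hβsupp : β ∈ c.support := by
        have : (β : Fin n →₀ ℕ) ∈ (c.support : Set (Fin n →₀ ℕ)) :=
          hcase ▸ Set.mem_insert β _
        exact Finset.mem_coe.mp this
      have hβle : s ≤ β := hle β hβsupp
      refine ⟨β - s, ?_, ?_, ?_⟩
      · intro hmem
        obtain ⟨α, hα, hval⟩ := Finset.mem_image.mp hmem
        apply hβS
        have hαβ : α = β := by
          have h3 := congrArg (· + s) hval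
          simpa [tsub_add_cancel_of_le (hSle α hα), tsub_add_cancel_of_le hβle] using h3
        rwa [← hαβ]
      · rw [hsuppc', hcase, Set.image_insert_eq, hS'def, Finset.coe_image]
      · have himg : expToVec '' (↑S' : Set (Fin n →₀ ℕ))
            = (-v) +ᵥ (expToVec '' (↑S : Set (Fin n →₀ ℕ))) := by
          rw [hS'def, Finset.coe_image, ← Set.image_vadd, ← Set.image_comp, ← Set.image_comp]
          apply Set.image_congr
          intro α hα
          show expToVec (α - s) = -v +ᵥ expToVec α
          rw [hexp α (hSle α (Finset.mem_coe.mp hα))]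
          rfl
        rw [himg, convexHull_vadd]
        have hint := (AffineIsometryEquiv.constVAdd ℝ (Fin n → ℝ)
            (-v)).toAffineIsometry.image_intrinsicInterior
            (convexHull ℝ (expToVec '' (↑S : Set (Fin n →₀ ℕ))))
        have hcoe : ((AffineIsometryEquiv.constVAdd ℝ (Fin n → ℝ)
            (-v)).toAffineIsometry : (Fin n → ℝ) → (Fin n → ℝ)) = fun y => -v +ᵥ y := rfl
        rw [hcoe] at hint
        rw [Set.image_vadd] at hint
        rw [hint]
        have : expToVec (β - s) = -v +ᵥ expToVec β := by
          rw [hexp β hβle]; rfl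
        rw [this]
        exact Set.vadd_mem_vadd_set hβint


end SoncAux

open SoncAux in
/-- Reduction strategy (degree): if a form `f ∈ H_{n,2d}` is not SOS+SONC, then for
every `ℓ ≥ 1` the form `x₁^{2ℓ}·f` is not in `Σ_{n,2d+2ℓ} + C_{n,2d+2ℓ}`. -/
theorem sos_plus_sonc_reduction_degree (n d : ℕ) (hn : 0 < n) (f : MvPolynomial (Fin n) ℝ)
    (hf : f.IsHomogeneous (2 * d))
    (hnot : ¬ ∃ g c : MvPolynomial (Fin n) ℝ, IsSOSForm d g ∧ IsSONC (2 * d) c ∧ f = g + c) :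
    ∀ ℓ : ℕ, 0 < ℓ →
      ¬ ∃ g c : MvPolynomial (Fin n) ℝ,
        IsSOSForm (d + ℓ) g ∧ IsSONC (2 * d + 2 * ℓ) c ∧
          X (⟨0, hn⟩ : Fin n) ^ (2 * ℓ) * f = g + c := by
  classical
  set i0 : Fin n := ⟨0, hn⟩ with hi0
  suffices key : ∀ m : ℕ,
      (∃ g c : MvPolynomial (Fin n) ℝ, IsSOSForm (d + m) g ∧ IsSONC (2 * d + 2 * m) c ∧
        X i0 ^ (2 * m) * f = g + c) →
      ∃ g c : MvPolynomial (Fin n) ℝ, IsSOSForm d g ∧ IsSONC (2 * d) c ∧ f = g + c by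
    intro ℓ _ h
    exact hnot (key ℓ h)
  intro m
  induction m with
  | zero => intro h; simpa using h
  | succ m ih =>
    intro hdec
    obtain ⟨g, c, ⟨k, gs, hgs, rfl⟩, ⟨k', cs, hcs, rfl⟩, heq⟩ := hdec
    apply ih
    have hvan : ∀ x : Fin n → ℝ, x i0 = 0 →
        (∀ i, eval x (gs i) = 0) ∧ (∀ j, eval x (cs j) = 0) := by
      intro x hx
      have h0 : eval x (∑ i, gs i ^ 2) + eval x (∑ j, cs j) = 0 := by
        rw [← map_add, ← heq, map_mul, map_pow, eval_X, hx]
        rw [zero_pow (by omega), zero_mul]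
      rw [map_sum, map_sum] at h0
      have hA : (0:ℝ) ≤ ∑ i, eval x (gs i ^ 2) :=
        Finset.sum_nonneg fun i _ => by rw [map_pow]; positivity
      have hB : (0:ℝ) ≤ ∑ j, eval x (cs j) :=
        Finset.sum_nonneg fun j _ => (hcs j).2.1 x
      have hA0 : ∑ i, eval x (gs i ^ 2) = 0 := by linarith
      have hB0 : ∑ j, eval x (cs j) = 0 := by linarith
      constructor
      · intro i
        have h1 := (Finset.sum_eq_zero_iff_of_nonneg
          (fun i _ => by rw [map_pow]; positivity)).mp hA0 i (Finset.mem_univ i)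
        rw [map_pow] at h1
        exact pow_eq_zero_iff (by norm_num) |>.mp h1
      · intro j
        exact (Finset.sum_eq_zero_iff_of_nonneg
          (fun j _ => (hcs j).2.1 x)).mp hB0 j (Finset.mem_univ j)
    set hsq : Fin k → MvPolynomial (Fin n) ℝ :=
      fun i => (gs i).divMonomial (Finsupp.single i0 1) with hhsq
    have hgdiv : ∀ i, gs i = X i0 * hsq i := by
      intro i
      have h1 : ∀ α ∈ (gs i).support, 1 ≤ α i0 := by
        intro α hα
        have := vanish_supp i0 (gs i) (fun x hx => (hvan x hx).1 i) α hα
        omega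
      have h2 := eq_pow_mul_div i0 1 (gs i) h1
      rwa [pow_one] at h2
    have hhom' : ∀ i, (hsq i).IsHomogeneous (d + m) := by
      intro i
      have h2 : (gs i).IsHomogeneous ((d + m) + 1) := by
        have h3 := hgs i
        have : d + (m + 1) = (d + m) + 1 := by ring
        rwa [this] at h3
      exact isHomogeneous_div i0 1 (d + m) (gs i) h2
    have hcd : ∀ j, ∃ c', cs j = X i0 ^ 2 * c' ∧ IsNonnegCircuit (2 * d + 2 * m) c' := by
      intro j
      refine circuit_div i0 (2 * d + 2 * m) (cs j) ?_ (fun x hx => (hvan x hx).2 j)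
      have h3 := hcs j
      have : 2 * d + 2 * (m + 1) = (2 * d + 2 * m) + 2 := by ring
      rwa [this] at h3
    choose cs' hcs'eq hcs'circ using hcd
    refine ⟨∑ i, hsq i ^ 2, ∑ j, cs' j, ⟨k, hsq, hhom', rfl⟩, ⟨k', cs', hcs'circ, rfl⟩, ?_⟩
    have hX2 : (X i0 : MvPolynomial (Fin n) ℝ) ^ 2 ≠ 0 := pow_ne_zero _ (X_ne_zero i0)
    apply mul_left_cancel₀ hX2
    calc X i0 ^ 2 * (X i0 ^ (2 * m) * f) = X i0 ^ (2 * (m + 1)) * f := by ring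
      _ = ∑ i, gs i ^ 2 + ∑ j, cs j := heq
      _ = X i0 ^ 2 * (∑ i, hsq i ^ 2 + ∑ j, cs' j) := by
          rw [mul_add, Finset.mul_sum, Finset.mul_sum]
          congr 1
          · refine Finset.sum_congr rfl fun i _ => ?_
            conv_lhs => rw [hgdiv i]
            ring
          · exact Finset.sum_congr rfl fun j _ => hcs'eq j
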